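/- Let G be an s×s complex matrix and α an eigenvalue whose algebraic multiplicity is ℓ. Let Λ be the sℓ×sℓ block bidiagonal matrix with diagonal blocks αI − G and superdiagonal blocks −I. Then dim Ker Λ = ℓ. -/

import Mathlib

open Matrix Polynomial

/-- The `ℓ × ℓ` block bidiagonal matrix with diagonal blocks `αI − G` and
superdiagonal blocks `−I` (all blocks of size `s × s`). -/
noncomputable def Lam (ℓ s : ℕ) (α : ℂ) (G : Matrix (Fin s) (Fin s) ℂ) :
    Matrix (Fin ℓ × Fin s) (Fin ℓ × Fin s) ℂ :=
  fun p q =>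
    if (p.1 : ℕ) = (q.1 : ℕ) then (α • (1 : Matrix (Fin s) (Fin s) ℂ) - G) p.2 q.2
    else if (p.1 : ℕ) + 1 = (q.1 : ℕ) then (-(1 : Matrix (Fin s) (Fin s) ℂ)) p.2 q.2
    else 0

lemma aux_charpoly_shift {s : ℕ} (M : Matrix (Fin s) (Fin s) ℂ) (α : ℂ) :
    (M.charpoly).comp (X + C α) = (M - α • 1).charpoly := by
  rw [Matrix.charpoly, Matrix.charpoly, comp_eq_aeval, AlgHom.map_det]
  congr 1
  apply Matrix.ext
  intro i j
  rcases eq_or_ne i j with rfl | h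
  · simp only [AlgHom.mapMatrix_apply, Matrix.map_apply, charmatrix_apply_eq, _root_.map_sub,
      aeval_X, aeval_C, Polynomial.algebraMap_eq, Matrix.sub_apply, Matrix.smul_apply,
      Matrix.one_apply_eq, smul_eq_mul, mul_one, map_sub]
    ring
  · simp only [AlgHom.mapMatrix_apply, Matrix.map_apply, charmatrix_apply_ne _ _ _ h,
      _root_.map_neg, aeval_C, Polynomial.algebraMap_eq, Matrix.sub_apply, Matrix.smul_apply,
      Matrix.one_apply_ne h, smul_eq_mul, mul_zero, sub_zero]

lemma aux_charpoly_mulVecLin {s : ℕ} (M : Matrix (Fin s) (Fin s) ℂ) :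
    LinearMap.charpoly (M.mulVecLin) = M.charpoly := by
  rw [← Matrix.toLin'_apply' M,
    ← LinearMap.charpoly_toMatrix (Matrix.toLin' M) (Pi.basisFun ℂ (Fin s)),
    LinearMap.toMatrix_eq_toMatrix', LinearMap.toMatrix'_toLin']

lemma aux_ker_pow_rootMult {s : ℕ} (f : Module.End ℂ (Fin s → ℂ)) (α : ℂ) :
    LinearMap.ker ((f - α • 1) ^ ((LinearMap.charpoly f).rootMultiplicity α)) =
      f.maxGenEigenspace α := by
  set p := LinearMap.charpoly f with hp
  set ℓ := p.rootMultiplicity α with hℓ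
  apply le_antisymm
  · intro x hx
    rw [Module.End.mem_maxGenEigenspace]
    exact ⟨ℓ, hx⟩
  · rw [Module.End.maxGenEigenspace_eq_genEigenspace_finrank, Module.End.genEigenspace_nat]
    set n := Module.finrank ℂ (Fin s → ℂ)
    set q := p /ₘ (X - C α) ^ ℓ with hq
    have hfact : (X - C α) ^ ℓ * q = p := pow_mul_divByMonic_rootMultiplicity_eq p α
    have hp0 : p ≠ 0 := (LinearMap.charpoly_monic f).ne_zero
    have hqd : ¬ (X - C α) ∣ q := by
      rw [dvd_iff_isRoot]
      exact eval_divByMonic_pow_rootMultiplicity_ne_zero α hp0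
    have hco : IsCoprime ((X - C α) ^ n) q :=
      (((irreducible_X_sub_C α).coprime_iff_not_dvd.mpr hqd)).pow_left
    obtain ⟨a, b, hab⟩ := hco
    intro x hx
    rw [LinearMap.mem_ker] at hx ⊢
    have hXa : aeval f (X - C α) = f - α • 1 := by
      rw [_root_.map_sub, aeval_X, aeval_C, Module.algebraMap_end_eq_smul_id,
        ← Module.End.one_eq_id]
    have hx' : (aeval f ((X - C α) ^ n)) x = 0 := by rw [map_pow, hXa]; exact hx
    have hx2 : x = (aeval f b) ((aeval f q) x) := by
      have h1 := congrArg (fun r => (aeval f r) x) hab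
      simp only [_root_.map_add, _root_.map_mul, _root_.map_one, LinearMap.add_apply,
        Module.End.mul_apply, Module.End.one_apply] at h1
      rw [hx', _root_.map_zero, zero_add] at h1
      exact h1.symm
    calc ((f - α • 1) ^ ℓ) x = (aeval f ((X - C α) ^ ℓ)) ((aeval f b) ((aeval f q) x)) := by
          rw [← hx2, map_pow, hXa]
      _ = (aeval f ((X - C α) ^ ℓ * (b * q))) x := by
          rw [_root_.map_mul, _root_.map_mul, Module.End.mul_apply, Module.End.mul_apply]
      _ = (aeval f (b * p)) x := by rw [show (X - C α) ^ ℓ * (b * q) = b * ((X - C α) ^ ℓ * q) by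
            ring, hfact]
      _ = 0 := by rw [_root_.map_mul, Module.End.mul_apply, hp, f.aeval_self_charpoly]; simp

theorem stmt8 {s ℓ : ℕ} (G : Matrix (Fin s) (Fin s) ℂ) (α : ℂ)
    (hroot : (Matrix.charpoly G).IsRoot α)
    (hmult : (Matrix.charpoly G).rootMultiplicity α = ℓ) :
    Module.finrank ℂ (LinearMap.ker (Matrix.mulVecLin (Lam ℓ s α G))) = ℓ := by
  classical
  have hp0 : (Matrix.charpoly G) ≠ 0 := (Matrix.charpoly_monic G).ne_zero
  have hℓpos : 0 < ℓ := hmult ▸ ((Polynomial.rootMultiplicity_pos hp0).mpr hroot)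
  set f : Module.End ℂ (Fin s → ℂ) := G.mulVecLin with hf
  set A : Matrix (Fin s) (Fin s) ℂ := α • 1 - G with hA
  set g : Module.End ℂ (Fin s → ℂ) := A.mulVecLin with hg
  have hgf : g = -(f - α • (1 : Module.End ℂ (Fin s → ℂ))) := by
    apply LinearMap.ext
    intro v
    funext i
    rw [hg, Matrix.mulVecLin_apply, hA, Matrix.sub_mulVec, Matrix.smul_mulVec,
      Matrix.one_mulVec]
    simp [hf, Matrix.mulVecLin_apply]
  -- the chain map
  set T : (Fin s → ℂ) →ₗ[ℂ] (Fin ℓ × Fin s → ℂ) :=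
    LinearMap.pi (fun p => (LinearMap.proj p.2).comp (g ^ (p.1 : ℕ))) with hTdef
  have hT : ∀ v p, T v p = (g ^ (p.1 : ℕ)) v p.2 := fun v p => rfl
  have hTinj : Function.Injective T := by
    intro v w h
    funext j
    have h2 := congrFun h (⟨0, hℓpos⟩, j)
    simpa [hT, pow_zero] using h2
  -- mulVec computation
  have hmv : ∀ (x : Fin ℓ × Fin s → ℂ) (p : Fin ℓ × Fin s),
      (Lam ℓ s α G).mulVecLin x p
        = g (fun m => x (p.1, m)) p.2
          - (if h : (p.1 : ℕ) + 1 < ℓ then x (⟨(p.1 : ℕ) + 1, h⟩, p.2) else 0) := by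
    intro x p
    rw [Matrix.mulVecLin_apply]
    show ∑ q : Fin ℓ × Fin s, Lam ℓ s α G p q * x q = _
    rw [Fintype.sum_prod_type]
    have step : ∀ k : Fin ℓ, ∑ m, Lam ℓ s α G p (k, m) * x (k, m)
        = (if (p.1 : ℕ) = (k : ℕ) then ∑ m, (α • 1 - G) p.2 m * x (k, m) else 0)
          + (if (p.1 : ℕ) + 1 = (k : ℕ) then -(x (k, p.2)) else 0) := by
      intro k
      by_cases h1 : (p.1 : ℕ) = (k : ℕ)
      · have h2 : ¬ ((p.1 : ℕ) + 1 = (k : ℕ)) := by omega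
        simp [Lam, h1, h2]
      · by_cases h2 : (p.1 : ℕ) + 1 = (k : ℕ)
        · simp [Lam, h1, h2, Matrix.one_apply, ite_mul, Finset.sum_ite_eq]
        · simp [Lam, h1, h2]
    have hsum1 : (∑ k : Fin ℓ, if (p.1 : ℕ) = (k : ℕ) then ∑ m, (α • 1 - G) p.2 m * x (k, m) else 0)
        = g (fun m => x (p.1, m)) p.2 := by
      rw [Finset.sum_eq_single p.1]
      · rw [if_pos rfl]; rfl
      · intro b _ hb
        rw [if_neg (by simpa [Fin.val_eq_val, eq_comm] using hb)]
      · intro h; exact absurd (Finset.mem_univ _) h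
    have hsum2 : (∑ k : Fin ℓ, if (p.1 : ℕ) + 1 = (k : ℕ) then -(x (k, p.2)) else 0)
        = -(if h : (p.1 : ℕ) + 1 < ℓ then x (⟨(p.1 : ℕ) + 1, h⟩, p.2) else 0) := by
      by_cases h : (p.1 : ℕ) + 1 < ℓ
      · rw [dif_pos h, Finset.sum_eq_single (⟨(p.1 : ℕ) + 1, h⟩ : Fin ℓ)]
        · rw [if_pos rfl]
        · intro b _ hb
          rw [if_neg (fun hc => hb (by simp [Fin.ext_iff, ← hc]))]
        · intro h'; exact absurd (Finset.mem_univ _) h'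
      · rw [dif_neg h, neg_zero, Finset.sum_eq_zero]
        intro k _
        rw [if_neg (by have := k.isLt; omega)]
    rw [Finset.sum_congr rfl (fun k _ => step k), Finset.sum_add_distrib, hsum1, hsum2,
      sub_eq_add_neg]
    -- end hmv
  have hker : LinearMap.ker (Matrix.mulVecLin (Lam ℓ s α G))
      = Submodule.map T (LinearMap.ker (g ^ ℓ)) := by
    ext x
    constructor
    · intro hx
      have hx' : ∀ (pp : Fin ℓ × Fin s), g (fun m => x (pp.1, m)) pp.2
          = (if h : (pp.1 : ℕ) + 1 < ℓ then x (⟨(pp.1 : ℕ) + 1, h⟩, pp.2) else 0) := by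
        intro pp
        have h3 := congrFun (LinearMap.mem_ker.mp hx) pp
        rw [hmv] at h3
        exact sub_eq_zero.mp h3
      set v : Fin s → ℂ := fun j => x (⟨0, hℓpos⟩, j) with hv
      have key : ∀ n (h : n < ℓ), (fun j => x (⟨n, h⟩, j)) = (g ^ n) v := by
        intro n
        induction n with
        | zero => intro h; simp only [pow_zero, Module.End.one_apply]; rfl
        | succ n ih =>
          intro h
          have hn : n < ℓ := Nat.lt_of_succ_lt h
          funext j
          have h4 := hx' (⟨n, hn⟩, j)
          rw [dif_pos (show ((⟨n, hn⟩ : Fin ℓ) : ℕ) + 1 < ℓ from h)] at h4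
          have h5 : x (⟨n + 1, h⟩, j) = g (fun m => x (⟨n, hn⟩, m)) j := h4.symm
          rw [h5, ih hn, pow_succ', Module.End.mul_apply]
      have hvker : v ∈ LinearMap.ker (g ^ ℓ) := by
        rw [LinearMap.mem_ker]
        have hlast : ℓ - 1 < ℓ := Nat.sub_lt hℓpos one_pos
        funext j
        have h4 := hx' (⟨ℓ - 1, hlast⟩, j)
        rw [dif_neg (show ¬ (((⟨ℓ - 1, hlast⟩ : Fin ℓ) : ℕ) + 1 < ℓ) by simp; omega)] at h4
        rw [key (ℓ - 1) hlast] at h4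
        have h5 : (ℓ - 1) + 1 = ℓ := Nat.succ_pred_eq_of_pos hℓpos
        calc (g ^ ℓ) v j = (g ^ ((ℓ - 1) + 1)) v j := by rw [h5]
          _ = g ((g ^ (ℓ - 1)) v) j := by rw [pow_succ', Module.End.mul_apply]
          _ = 0 := h4
      exact ⟨v, hvker, by funext pp; exact (congrFun (key pp.1 pp.1.isLt) pp.2).symm⟩
    · rintro ⟨v, hv, rfl⟩
      rw [LinearMap.mem_ker]
      funext pp
      rw [hmv]
      have h1 : (fun m => T v (pp.1, m)) = (g ^ (pp.1 : ℕ)) v := rfl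
      rw [h1]
      have h2 : g ((g ^ (pp.1 : ℕ)) v) = (g ^ ((pp.1 : ℕ) + 1)) v := by
        rw [pow_succ', Module.End.mul_apply]
      by_cases h : (pp.1 : ℕ) + 1 < ℓ
      · rw [dif_pos h]
        show g ((g ^ (pp.1 : ℕ)) v) pp.2 - (g ^ (((⟨(pp.1 : ℕ) + 1, h⟩ : Fin ℓ)) : ℕ)) v pp.2 = _
        rw [h2]
        simp
      · rw [dif_neg h]
        have h3 : (pp.1 : ℕ) + 1 = ℓ := by have := pp.1.isLt; omega
        have h4 : g ((g ^ (pp.1 : ℕ)) v) = 0 := by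
          rw [h2, h3]; exact LinearMap.mem_ker.mp hv
        rw [congrFun h4 pp.2]
        simp
  rw [hker, ← LinearEquiv.finrank_eq (Submodule.equivMapOfInjective T hTinj _)]
  have hkg : LinearMap.ker (g ^ ℓ) = LinearMap.ker ((f - α • 1) ^ ℓ) := by
    rw [hgf, show -(f - α • 1) = (-1 : ℂ) • (f - α • 1) from (neg_one_smul ℂ _).symm,
      _root_.smul_pow, LinearMap.ker_smul _ _ (pow_ne_zero ℓ (by norm_num : (-1 : ℂ) ≠ 0))]
  rw [hkg]
  have hcp : LinearMap.charpoly f = Matrix.charpoly G := aux_charpoly_mulVecLin G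
  have hℓ' : (LinearMap.charpoly f).rootMultiplicity α = ℓ := by rw [hcp, hmult]
  rw [← hℓ', aux_ker_pow_rootMult f α]
  have h0 : f.maxGenEigenspace α = (f - α • 1).maxGenEigenspace 0 := by
    ext x
    simp [Module.End.mem_maxGenEigenspace]
  rw [h0, LinearMap.finrank_maxGenEigenspace_zero_eq]
  have hfg : f - α • 1 = (G - α • 1).mulVecLin := by
    symm
    apply LinearMap.ext
    intro v
    funext i
    rw [Matrix.mulVecLin_apply, Matrix.sub_mulVec, Matrix.smul_mulVec, Matrix.one_mulVec]
    simp [hf, Matrix.mulVecLin_apply]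
  rw [hfg, aux_charpoly_mulVecLin, ← aux_charpoly_shift G α,
    ← Polynomial.rootMultiplicity_eq_natTrailingDegree, hmult]
  exact hℓ'.symm
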